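/- Let k ≥ 1, r ≥ 1 and n ≥ 0 be integers, let w₁,…,w_k be nonzero complex numbers, and let N be a complex number. Then: (i) ( Σ_{m₁+2m₂+⋯+n·mₙ=n} n!/(m₁!⋯mₙ!) · ( −N + Σ_{l=1}^{k} 1/w_l )^{m₁} · ∏_{j=2}^{n} ( (1/j)·Σ_{l=1}^{k} 1/w_l^{j} )^{m_j} )^{r} = Σ ( ∏_{j=1}^{r} (−N)^{n−Σ_{l=1}^{k} s_{lj}} · C(n, Σ_{l=1}^{k} s_{lj}) · (Σ_{l=1}^{k} s_{lj})! ) / ∏_{l=1}^{k} w_l^{Σ_{j=1}^{r} s_{lj}}, the right-hand sum being over all nonnegative integers s_{lj} (1 ≤ l ≤ k, 1 ≤ j ≤ r) with Σ_{l=1}^{k} s_{lj} ≤ n for each j; and (ii) ( Σ_{m₁+2m₂+⋯+n·mₙ=n} n!/(m₁!⋯mₙ!) · ∏_{j=1}^{n} ( (1/j)·Σ_{l=1}^{k} 1/w_l^{j} )^{m_j} )^{r} = Σ (n!)^{r} / ∏_{l=1}^{k} w_l^{Σ_{j=1}^{r} h_{lj}}, the right-hand sum being over all nonnegative integers h_{lj}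 (1 ≤ l ≤ k, 1 ≤ j ≤ r) with Σ_{l=1}^{k} h_{lj} = n for each j. -/

import Mathlib

open Finset

noncomputable section

namespace PartSums

open PowerSeries

/-- exp(a X) -/
def expS (a : ℂ) : PowerSeries ℂ := PowerSeries.mk fun i => a ^ i / i.factorial
/-- exp(c X^e) -/
def expPow (c : ℂ) (e : ℕ) : PowerSeries ℂ :=
  PowerSeries.mk fun i => if e ∣ i then c ^ (i / e) / (i / e).factorial else 0
/-- 1/(1 - x X) -/
def geom (x : ℂ) : PowerSeries ℂ := PowerSeries.mk fun i => x ^ i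

lemma coeff_derivativeFun' (f : PowerSeries ℂ) (n : ℕ) :
    coeff n (derivativeFun f) = coeff (n + 1) f * (n + 1) := coeff_derivative f n

lemma deriv_expS (a : ℂ) : derivativeFun (expS a) = C a * expS a := by
  ext n
  rw [coeff_derivativeFun', coeff_C_mul]
  simp only [expS, coeff_mk]
  rw [Nat.factorial_succ, pow_succ]
  have h1 : ((n.factorial : ℂ)) ≠ 0 := by exact_mod_cast Nat.factorial_ne_zero n
  have h2 : ((n : ℂ) + 1) ≠ 0 := Nat.cast_add_one_ne_zero n
  push_cast
  field_simp

lemma deriv_geom (x : ℂ) : derivativeFun (geom x) = (C x * geom x) * geom x := by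
  ext n
  rw [coeff_derivativeFun', mul_assoc, coeff_C_mul, coeff_mul]
  rw [Finset.Nat.sum_antidiagonal_eq_sum_range_succ_mk]
  simp only [geom, coeff_mk]
  have : ∀ i ∈ Finset.range (n+1), x ^ i * x ^ (n - i) = x ^ n := by
    intro i hi
    rw [← pow_add]
    congr 1
    simp only [mem_range] at hi
    omega
  rw [Finset.sum_congr rfl this, Finset.sum_const, card_range]
  rw [pow_succ']
  ring

lemma deriv_expPow (c : ℂ) (e : ℕ) (he : 1 ≤ e) :
    derivativeFun (expPow c e) = (monomial (e - 1)) (c * e) * expPow c e := by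
  ext n
  rw [coeff_derivativeFun', coeff_mul, Finset.Nat.sum_antidiagonal_eq_sum_range_succ_mk]
  simp only [expPow, coeff_mk, coeff_monomial]
  have hrw : ∀ i ∈ Finset.range (n+1),
      (if i = e - 1 then c * e else 0) *
          (if e ∣ n - i then c ^ ((n-i) / e) / ((n-i)/e).factorial else 0) =
      (if i = e - 1 then
        (c * e) * (if e ∣ n - i then c ^ ((n-i) / e) / ((n-i)/e).factorial else 0) else 0) := by
    intro i _
    split <;> simp
  rw [Finset.sum_congr rfl hrw, Finset.sum_ite_eq' (Finset.range (n+1))]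
  by_cases hd : e ∣ n + 1
  · obtain ⟨q, hq⟩ := hd
    have hq1 : 1 ≤ q := by
      rcases Nat.eq_zero_or_pos q with h | h
      · subst h; omega
      · exact h
    have hle : e ≤ e * q := Nat.le_mul_of_pos_right e hq1
    have hmem : e - 1 ∈ Finset.range (n+1) := by
      simp only [mem_range]
      omega
    have hkey : e * (q - 1) + e = e * q := by
      rw [← Nat.mul_succ]; congr 1; omega
    have hsub : n - (e - 1) = e * (q - 1) := by omega
    have hd2 : e ∣ n - (e - 1) := ⟨q - 1, hsub⟩
    rw [if_pos hmem, if_pos ⟨q, hq⟩, if_pos hd2, hq,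
      Nat.mul_div_cancel_left _ (by omega : 0 < e), hsub,
      Nat.mul_div_cancel_left _ (by omega : 0 < e)]
    have hcast : ((n : ℂ) + 1) = (e : ℂ) * q := by exact_mod_cast congrArg (Nat.cast (R := ℂ)) hq
    obtain ⟨q', rfl⟩ : ∃ q', q = q' + 1 := ⟨q - 1, by omega⟩
    simp only [Nat.add_sub_cancel]
    rw [hcast, pow_succ, Nat.factorial_succ]
    have h1 : ((q'.factorial : ℂ)) ≠ 0 := by exact_mod_cast Nat.factorial_ne_zero _
    have h2 : ((q' : ℕ) : ℂ) + 1 ≠ 0 := Nat.cast_add_one_ne_zero _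
    push_cast
    field_simp
  · rw [if_neg hd, zero_mul]
    by_cases hmem : e - 1 ∈ Finset.range (n+1)
    · rw [if_pos hmem]
      have hnd : ¬ e ∣ n - (e - 1) := by
        intro hdd
        apply hd
        have : n + 1 = (n - (e-1)) + e := by
          simp only [mem_range] at hmem; omega
        rw [this]
        exact Nat.dvd_add hdd dvd_rfl
      rw [if_neg hnd, mul_zero]
    · rw [if_neg hmem]

lemma deriv_prod {ι : Type*} (s : Finset ι) (f g : ι → PowerSeries ℂ)
    (h : ∀ i ∈ s, derivativeFun (f i) = g i * f i) :
    derivativeFun (∏ i ∈ s, f i) = (∑ i ∈ s, g i) * ∏ i ∈ s, f i := by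
  classical
  induction s using Finset.induction_on with
  | empty => simp [derivativeFun_one]
  | @insert a s hs ih =>
    rw [Finset.prod_insert hs, Finset.sum_insert hs, derivativeFun_mul,
      ih (fun i hi => h i (Finset.mem_insert_of_mem hi)), h a (Finset.mem_insert_self a s)]
    simp only [smul_eq_mul]
    ring

lemma recurrence {f D : PowerSeries ℂ} (h : derivativeFun f = D * f) (n : ℕ) :
    coeff (n+1) f * ((n : ℂ) + 1) =
      ∑ i ∈ Finset.range (n+1), coeff i D * coeff (n - i) f := by
  have := congrArg (coeff n) h
  rw [coeff_derivativeFun', coeff_mul, Finset.Nat.sum_antidiagonal_eq_sum_range_succ_mk] at this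
  exact_mod_cast this

variable {k : ℕ} (N : ℂ) (w : Fin k → ℂ)

def cc (d : ℕ) : ℂ := (if d = 1 then -N else 0) + (1/(d:ℂ)) * ∑ l, (w l)⁻¹ ^ d

def F (M : ℕ) : PowerSeries ℂ := ∏ j ∈ Finset.range M, expPow (cc N w (j+1)) (j+1)
def DF (M : ℕ) : PowerSeries ℂ :=
  ∑ j ∈ Finset.range M, (monomial j) (cc N w (j+1) * ((j : ℂ)+1))
def Q : PowerSeries ℂ := expS (-N) * ∏ l : Fin k, geom ((w l)⁻¹)
def DQ : PowerSeries ℂ := C (-N) + ∑ l : Fin k, C ((w l)⁻¹) * geom ((w l)⁻¹)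

lemma deriv_F (M : ℕ) : derivativeFun (F N w M) = DF N w M * F N w M := by
  rw [F, DF]
  apply deriv_prod
  intro j _
  have := deriv_expPow (cc N w (j+1)) (j+1) (by omega)
  simpa using this

lemma deriv_Q : derivativeFun (Q N w) = DQ N w * Q N w := by
  rw [Q, DQ, derivativeFun_mul, deriv_expS,
    deriv_prod Finset.univ _ (fun l => C ((w l)⁻¹) * geom ((w l)⁻¹))
      (fun l _ => deriv_geom _)]
  simp only [smul_eq_mul]
  ring

lemma coeff_DF (M i : ℕ) :
    coeff i (DF N w M) = if i < M then cc N w (i+1) * ((i : ℂ)+1) else 0 := by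
  rw [DF, map_sum]
  simp only [coeff_monomial]
  rw [Finset.sum_ite_eq (Finset.range M)]
  simp [mem_range]

lemma coeff_DQ (i : ℕ) :
    coeff i (DQ N w) = (if i = 0 then -N else 0) + ∑ l, ((w l)⁻¹) ^ (i+1) := by
  rw [DQ, map_add, map_sum, coeff_C]
  congr 1
  refine Finset.sum_congr rfl fun l _ => ?_
  rw [coeff_C_mul]
  simp [geom, coeff_mk, pow_succ']

lemma coeff_DF_eq_DQ {M i : ℕ} (h : i < M) :
    coeff i (DF N w M) = coeff i (DQ N w) := by
  rw [coeff_DF, coeff_DQ, if_pos h, cc]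
  have h2 : ((i : ℂ) + 1) ≠ 0 := Nat.cast_add_one_ne_zero i
  by_cases hi : i = 0
  · subst hi; norm_num
  · rw [if_neg (by omega : ¬ (i + 1 = 1)), if_neg hi, zero_add, zero_add,
      mul_comm, ← mul_assoc]
    push_cast
    rw [mul_one_div, div_self h2, one_mul]

lemma coeff_F_eq_Q (M : ℕ) : ∀ n, n ≤ M → coeff n (F N w M) = coeff n (Q N w) := by
  intro n
  induction n using Nat.strong_induction_on with
  | _ n ih =>
    match n with
    | 0 =>
      intro _
      rw [coeff_zero_eq_constantCoeff_apply, coeff_zero_eq_constantCoeff_apply, F, Q,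
        map_prod, map_mul, map_prod]
      simp [expPow, expS, geom, constantCoeff_mk]
    | (n+1) =>
      intro hnM
      have h1 := recurrence (deriv_F N w M) n
      have h2 := recurrence (deriv_Q N w) n
      have hside : ∀ i ∈ Finset.range (n+1),
          coeff i (DF N w M) * coeff (n - i) (F N w M) =
          coeff i (DQ N w) * coeff (n - i) (Q N w) := by
        intro i hi
        simp only [mem_range] at hi
        rw [coeff_DF_eq_DQ N w (by omega), ih (n - i) (by omega) (by omega)]
      rw [Finset.sum_congr rfl hside, ← h2] at h1
      exact mul_right_cancel₀ (Nat.cast_add_one_ne_zero n) h1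

lemma coeff_F_explicit (n : ℕ) :
    (n.factorial : ℂ) * coeff n (F N w n) =
    ∑ m ∈ (Fintype.piFinset fun _ : Fin n => Finset.range (n + 1)).filter
        (fun m => ∑ j : Fin n, ((j : ℕ) + 1) * m j = n),
      ((n.factorial : ℂ) / ∏ j, ((m j).factorial : ℂ)) *
        ∏ j : Fin n, (cc N w ((j : ℕ) + 1)) ^ (m j) := by
  rw [F, coeff_prod, Finset.mul_sum]
  have hterm : ∀ l ∈ finsuppAntidiag (Finset.range n) n,
      (n.factorial : ℂ) * ∏ j ∈ Finset.range n, coeff (l j) (expPow (cc N w (j+1)) (j+1)) =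
      if (∀ j ∈ Finset.range n, (j+1) ∣ l j) then
        (n.factorial : ℂ) * ∏ j ∈ Finset.range n,
          (cc N w (j+1)) ^ (l j / (j+1)) / ((l j / (j+1)).factorial : ℂ)
      else 0 := by
    intro l _
    simp only [expPow, coeff_mk]
    rw [Finset.prod_ite_zero]
    split <;> simp
  rw [Finset.sum_congr rfl hterm, ← Finset.sum_filter]
  refine Finset.sum_nbij' (i := fun l => fun j : Fin n => l j / ((j : ℕ) + 1))
    (j := fun m => Finsupp.onFinset (Finset.range n)
      (fun j => if h : j < n then (j + 1) * m ⟨j, h⟩ else 0)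
      (fun j hj => by by_contra hc; simp only [mem_range] at hc; simp [hc] at hj))
    ?_ ?_ ?_ ?_ ?_
  · intro l hl
    simp only [Finset.mem_filter, Finset.mem_finsuppAntidiag] at hl
    obtain ⟨⟨hsum, hsupp⟩, hdvd⟩ := hl
    simp only [Finset.mem_filter, Fintype.mem_piFinset, Finset.mem_range]
    constructor
    · intro j
      have h1 : l (j : ℕ) ≤ ∑ i ∈ Finset.range n, l i :=
        Finset.single_le_sum (fun i _ => Nat.zero_le _) (by simp [Finset.mem_range, j.isLt])
      have h2 : ∑ i ∈ Finset.range n, l i = n := hsum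
      have := Nat.div_le_self (l (j : ℕ)) ((j : ℕ) + 1)
      omega
    · rw [Fin.sum_univ_eq_sum_range (fun i => (i + 1) * (l i / (i + 1))) n,
        Finset.sum_congr rfl (fun j hj => Nat.mul_div_cancel' (hdvd j hj))]
      exact hsum
  · intro m hm
    simp only [Finset.mem_filter, Fintype.mem_piFinset, Finset.mem_range] at hm
    obtain ⟨hbd, hsum⟩ := hm
    simp only [Finset.mem_filter, Finset.mem_finsuppAntidiag]
    refine ⟨⟨?_, ?_⟩, ?_⟩
    · show (∑ j ∈ Finset.range n, Finsupp.onFinset _ _ _ j) = n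
      rw [← Fin.sum_univ_eq_sum_range
        (fun j => (Finsupp.onFinset (Finset.range n)
          (fun j => if h : j < n then (j + 1) * m ⟨j, h⟩ else 0) _) j) n]
      refine Eq.trans (Finset.sum_congr rfl fun j _ => ?_) hsum
      simp only [Finsupp.onFinset_apply, dif_pos j.isLt, Fin.eta]
    · exact Finsupp.support_onFinset_subset
    · intro j hj
      simp only [Finset.mem_range] at hj
      simp only [Finsupp.onFinset_apply, dif_pos hj]
      exact Dvd.intro _ rfl
  · intro l hl
    simp only [Finset.mem_filter, Finset.mem_finsuppAntidiag] at hl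
    obtain ⟨⟨hsum, hsupp⟩, hdvd⟩ := hl
    ext j
    simp only [Finsupp.onFinset_apply]
    by_cases hj : j < n
    · rw [dif_pos hj]
      exact Nat.mul_div_cancel' (hdvd j (by simp [Finset.mem_range, hj]))
    · rw [dif_neg hj]
      by_contra hc
      have h1 : j ∈ l.support := Finsupp.mem_support_iff.2 fun h => hc h.symm
      have := hsupp h1
      simp only [Finset.mem_range] at this
      omega
  · intro m _
    funext j
    simp only [Finsupp.onFinset_apply, dif_pos j.isLt, Fin.eta]
    rw [Nat.mul_div_cancel_left _ (Nat.succ_pos _)]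
  · intro l hl
    rw [← Fin.prod_univ_eq_prod_range
      (fun i => (cc N w (i+1)) ^ (l i / (i+1)) / (((l i / (i+1)).factorial : ℂ))) n]
    rw [Finset.prod_div_distrib]
    ring

lemma coeff_geomProd (b n : ℕ) (hb : b ≤ n) :
    coeff b (∏ l : Fin k, geom ((w l)⁻¹)) =
    ∑ s ∈ (Fintype.piFinset fun _ : Fin k => Finset.range (n + 1)).filter
        (fun s => ∑ l, s l = b),
      ∏ l, ((w l)⁻¹) ^ (s l) := by
  rw [coeff_prod]
  simp only [geom, coeff_mk]
  refine Finset.sum_nbij' (i := fun f => ⇑f) (j := fun s => Finsupp.equivFunOnFinite.symm s)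
    ?_ ?_ ?_ ?_ ?_
  · intro f hf
    simp only [Finset.mem_finsuppAntidiag] at hf
    simp only [Finset.mem_filter, Fintype.mem_piFinset, Finset.mem_range]
    refine ⟨fun l => ?_, hf.1⟩
    have h1 : f l ≤ ∑ i : Fin k, f i :=
      Finset.single_le_sum (fun i _ => Nat.zero_le _) (Finset.mem_univ l)
    have h2 : ∑ i : Fin k, f i = b := hf.1
    omega
  · intro s hs
    simp only [Finset.mem_filter, Fintype.mem_piFinset, Finset.mem_range] at hs
    simp only [Finset.mem_finsuppAntidiag]
    refine ⟨?_, Finset.subset_univ _⟩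
    rw [← hs.2]
    refine Finset.sum_congr rfl fun l _ => ?_
    simp
  · intro f _
    exact Finsupp.equivFunOnFinite.symm_apply_apply f
  · intro s _
    funext l
    simp
  · intro f _
    rfl

lemma coeff_Q_explicit (n : ℕ) :
    (n.factorial : ℂ) * coeff n (Q N w) =
    ∑ s ∈ (Fintype.piFinset fun _ : Fin k => Finset.range (n + 1)).filter
        (fun s => ∑ l, s l ≤ n),
      ((-N) ^ (n - ∑ l, s l) * (n.choose (∑ l, s l) : ℂ) * ((∑ l, s l).factorial : ℂ)) /
        ∏ l, w l ^ (s l) := by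
  rw [Q, coeff_mul, Finset.Nat.sum_antidiagonal_eq_sum_range_succ_mk, Finset.mul_sum]
  rw [← Finset.sum_range_reflect]
  have hfib := Finset.sum_fiberwise_of_maps_to
    (s := (Fintype.piFinset fun _ : Fin k => Finset.range (n + 1)).filter
        (fun s => ∑ l, s l ≤ n))
    (t := Finset.range (n + 1)) (g := fun s => ∑ l, s l)
    (fun p hp => by
        simp only [Finset.mem_filter] at hp
        simp only [Finset.mem_range]
        omega)
    (fun s => ((-N) ^ (n - ∑ l, s l) * (n.choose (∑ l, s l) : ℂ) *
        ((∑ l, s l).factorial : ℂ)) / ∏ l, w l ^ (s l))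
  rw [← hfib]
  refine Finset.sum_congr rfl fun b hb => ?_
  simp only [Finset.mem_range] at hb
  have hb' : b ≤ n := by omega
  have e2 : n - (n - b) = b := by omega
  simp only [Nat.succ_sub_one, e2]
  simp only [expS, coeff_mk]
  rw [coeff_geomProd w b n hb', Finset.mul_sum, Finset.mul_sum]
  have hsets : ((Fintype.piFinset fun _ : Fin k => Finset.range (n + 1)).filter
        (fun s => ∑ l, s l ≤ n)).filter (fun s => ∑ l, s l = b) =
      (Fintype.piFinset fun _ : Fin k => Finset.range (n + 1)).filter
        (fun s => ∑ l, s l = b) := by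
    rw [Finset.filter_filter]
    refine Finset.filter_congr fun s _ => ?_
    constructor
    · exact fun h => h.2
    · exact fun h => ⟨by omega, h⟩
  rw [hsets]
  refine Finset.sum_congr rfl ?_
  intro s hs
  simp only [Finset.mem_filter] at hs
  rw [hs.2]
  have hchoose : (n.factorial : ℂ) = (n.choose b : ℂ) * (b.factorial : ℂ) *
      ((n - b).factorial : ℂ) := by
    exact_mod_cast (Nat.choose_mul_factorial_mul_factorial hb').symm
  have hfac : ((n - b).factorial : ℂ) ≠ 0 := by exact_mod_cast Nat.factorial_ne_zero _
  have hprod : ∏ l, ((w l)⁻¹) ^ (s l) = (∏ l, w l ^ (s l))⁻¹ := by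
    rw [← Finset.prod_inv_distrib]
    exact Finset.prod_congr rfl fun l _ => inv_pow _ _
  rw [hprod, hchoose]
  field_simp

/-- The single-sum identity. -/
lemma single (n : ℕ) :
    (∑ m ∈ (Fintype.piFinset fun _ : Fin n => Finset.range (n + 1)).filter
          (fun m => ∑ j : Fin n, ((j : ℕ) + 1) * m j = n),
        ((n.factorial : ℂ) / ∏ j, ((m j).factorial : ℂ)) *
          ∏ j : Fin n,
            (if (j : ℕ) = 0 then -N + ∑ l, 1 / w l
              else (1 / ((j : ℕ) + 1) : ℂ) * ∑ l, 1 / w l ^ ((j : ℕ) + 1)) ^ (m j)) =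
    ∑ s ∈ (Fintype.piFinset fun _ : Fin k => Finset.range (n + 1)).filter
        (fun s => ∑ l, s l ≤ n),
      ((-N) ^ (n - ∑ l, s l) * (n.choose (∑ l, s l) : ℂ) * ((∑ l, s l).factorial : ℂ)) /
        ∏ l, w l ^ (s l) := by
  have hfac : ∀ j : Fin n,
      (if (j : ℕ) = 0 then -N + ∑ l, 1 / w l
        else (1 / ((j : ℕ) + 1) : ℂ) * ∑ l, 1 / w l ^ ((j : ℕ) + 1)) = cc N w ((j : ℕ) + 1) := by
    intro j
    by_cases hj : (j : ℕ) = 0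
    · rw [if_pos hj, hj, cc]
      norm_num [one_div]
    · rw [if_neg hj, cc, if_neg (by omega), zero_add]
      simp [one_div, inv_pow]
  have h1 : (∑ m ∈ (Fintype.piFinset fun _ : Fin n => Finset.range (n + 1)).filter
          (fun m => ∑ j : Fin n, ((j : ℕ) + 1) * m j = n),
        ((n.factorial : ℂ) / ∏ j, ((m j).factorial : ℂ)) *
          ∏ j : Fin n,
            (if (j : ℕ) = 0 then -N + ∑ l, 1 / w l
              else (1 / ((j : ℕ) + 1) : ℂ) * ∑ l, 1 / w l ^ ((j : ℕ) + 1)) ^ (m j)) =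
      (n.factorial : ℂ) * coeff n (F N w n) := by
    rw [coeff_F_explicit]
    refine Finset.sum_congr rfl fun m _ => ?_
    congr 1
    exact Finset.prod_congr rfl fun j _ => by rw [hfac j]
  rw [h1, coeff_F_eq_Q N w n n le_rfl, coeff_Q_explicit]

lemma piFinset_filter {r : ℕ} {α : Type*} [DecidableEq α] (A : Finset α) (P : α → Prop)
    [DecidablePred P] :
    (Fintype.piFinset fun _ : Fin r => A.filter P) =
      (Fintype.piFinset fun _ : Fin r => A).filter (fun p => ∀ j, P (p j)) := by
  ext p
  simp only [Fintype.mem_piFinset, Finset.mem_filter]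
  constructor
  · exact fun h => ⟨fun j => (h j).1, fun j => (h j).2⟩
  · exact fun h j => ⟨h.1 j, h.2 j⟩

end PartSums

open PartSums in
/-- **Proposition (powers of the two partition sums).**
On the left-hand sides the sums run over all tuples `(m₁,…,mₙ)` of nonnegative integers
(realised as `m : Fin n → ℕ`) with `m₁ + 2m₂ + ⋯ + n·mₙ = n`; the factor for `j = 1`
(Lean index `0`) is `(−N + Σ_l 1/w_l)^{m₁}` in (i) and `((1/1)·Σ_l 1/w_l)^{m₁}` in (ii),
and for `j ≥ 2` it is `((1/j)·Σ_l 1/w_l^j)^{m_j}`.  On the right-hand sides the sums run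
over all matrices `s, h : Fin r → Fin k → ℕ` (with `s j l = s_{lj}`) such that
`Σ_l s_{lj} ≤ n`, resp. `Σ_l h_{lj} = n`, for each `j`. -/
theorem powers_of_partition_sums (k r n : ℕ) (hk : 1 ≤ k) (hr : 1 ≤ r) (N : ℂ)
    (w : Fin k → ℂ) (hw : ∀ l, w l ≠ 0) :
    ((∑ m ∈ (Fintype.piFinset fun _ : Fin n => Finset.range (n + 1)).filter
          (fun m => ∑ j : Fin n, ((j : ℕ) + 1) * m j = n),
        ((n.factorial : ℂ) / ∏ j, ((m j).factorial : ℂ)) *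
          ∏ j : Fin n,
            (if (j : ℕ) = 0 then -N + ∑ l, 1 / w l
              else (1 / ((j : ℕ) + 1) : ℂ) * ∑ l, 1 / w l ^ ((j : ℕ) + 1)) ^ (m j)) ^ r =
      ∑ s ∈ (Fintype.piFinset fun _ : Fin r => Fintype.piFinset fun _ : Fin k =>
            Finset.range (n + 1)).filter (fun s => ∀ j, ∑ l, s j l ≤ n),
        (∏ j : Fin r, ((-N) ^ (n - ∑ l, s j l) * (n.choose (∑ l, s j l) : ℂ) *
            ((∑ l, s j l).factorial : ℂ))) /
          ∏ l : Fin k, w l ^ (∑ j, s j l)) ∧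
    ((∑ m ∈ (Fintype.piFinset fun _ : Fin n => Finset.range (n + 1)).filter
          (fun m => ∑ j : Fin n, ((j : ℕ) + 1) * m j = n),
        ((n.factorial : ℂ) / ∏ j, ((m j).factorial : ℂ)) *
          ∏ j : Fin n,
            ((1 / ((j : ℕ) + 1) : ℂ) * ∑ l, 1 / w l ^ ((j : ℕ) + 1)) ^ (m j)) ^ r =
      ∑ h ∈ (Fintype.piFinset fun _ : Fin r => Fintype.piFinset fun _ : Fin k =>
            Finset.range (n + 1)).filter (fun h => ∀ j, ∑ l, h j l = n),
        ((n.factorial : ℂ) ^ r) / ∏ l : Fin k, w l ^ (∑ j, h j l)) := by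
  constructor
  · -- part (i)
    rw [single N w n]
    set T := (Fintype.piFinset fun _ : Fin k => Finset.range (n + 1)).filter
        (fun s => ∑ l, s l ≤ n) with hT
    set g : (Fin k → ℕ) → ℂ := fun s =>
      ((-N) ^ (n - ∑ l, s l) * (n.choose (∑ l, s l) : ℂ) * ((∑ l, s l).factorial : ℂ)) /
        ∏ l, w l ^ (s l) with hg
    have hpow : (∑ s ∈ T, g s) ^ r = ∑ p ∈ Fintype.piFinset (fun _ : Fin r => T),
        ∏ j : Fin r, g (p j) := by
      rw [← Finset.prod_univ_sum (fun _ : Fin r => T) (fun _ s => g s)]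
      simp [Finset.prod_const]
    rw [hpow]
    refine Finset.sum_congr ?_ ?_
    · ext p
      simp only [Fintype.mem_piFinset, Finset.mem_filter, hT]
      constructor
      · exact fun h => ⟨fun j => (h j).1, fun j => (h j).2⟩
      · exact fun h j => ⟨h.1 j, h.2 j⟩
    · intro p _
      simp only [hg]
      rw [Finset.prod_div_distrib]
      congr 1
      rw [Finset.prod_comm]
      exact Finset.prod_congr rfl fun l _ => Finset.prod_pow_eq_pow_sum _ _ _
  · -- part (ii)
    have hLHS : (∑ m ∈ (Fintype.piFinset fun _ : Fin n => Finset.range (n + 1)).filter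
          (fun m => ∑ j : Fin n, ((j : ℕ) + 1) * m j = n),
        ((n.factorial : ℂ) / ∏ j, ((m j).factorial : ℂ)) *
          ∏ j : Fin n,
            ((1 / ((j : ℕ) + 1) : ℂ) * ∑ l, 1 / w l ^ ((j : ℕ) + 1)) ^ (m j)) =
      (∑ m ∈ (Fintype.piFinset fun _ : Fin n => Finset.range (n + 1)).filter
          (fun m => ∑ j : Fin n, ((j : ℕ) + 1) * m j = n),
        ((n.factorial : ℂ) / ∏ j, ((m j).factorial : ℂ)) *
          ∏ j : Fin n,
            (if (j : ℕ) = 0 then -(0:ℂ) + ∑ l, 1 / w l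
              else (1 / ((j : ℕ) + 1) : ℂ) * ∑ l, 1 / w l ^ ((j : ℕ) + 1)) ^ (m j)) := by
      refine Finset.sum_congr rfl fun m _ => ?_
      congr 1
      refine Finset.prod_congr rfl fun j _ => ?_
      congr 1
      by_cases hj : (j : ℕ) = 0
      · rw [if_pos hj, hj]
        norm_num
      · rw [if_neg hj]
    rw [hLHS, single (0 : ℂ) w n]
    -- now reduce the ≤-filtered sum to the =-filtered sum
    have hreduce : (∑ s ∈ (Fintype.piFinset fun _ : Fin k => Finset.range (n + 1)).filter
          (fun s => ∑ l, s l ≤ n),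
        ((-(0:ℂ)) ^ (n - ∑ l, s l) * (n.choose (∑ l, s l) : ℂ) * ((∑ l, s l).factorial : ℂ)) /
          ∏ l, w l ^ (s l)) =
      ∑ s ∈ (Fintype.piFinset fun _ : Fin k => Finset.range (n + 1)).filter
          (fun s => ∑ l, s l = n),
        (n.factorial : ℂ) / ∏ l, w l ^ (s l) := by
      have h0 : ∀ x ∈ (Fintype.piFinset fun _ : Fin k => Finset.range (n + 1)).filter
          (fun s => ∑ l, s l ≤ n),
          (((-(0:ℂ)) ^ (n - ∑ l, x l) * (n.choose (∑ l, x l) : ℂ) *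
            ((∑ l, x l).factorial : ℂ)) / ∏ l, w l ^ (x l)) ≠ 0 → (∑ l, x l = n) := by
        intro x hx hne
        by_contra hc
        apply hne
        simp only [Finset.mem_filter] at hx
        have hlt : ∑ l, x l < n := lt_of_le_of_ne hx.2 hc
        rw [neg_zero, zero_pow (by omega : n - ∑ l, x l ≠ 0), zero_mul, zero_mul, zero_div]
      rw [← Finset.sum_filter_of_ne h0]
      rw [Finset.filter_filter]
      have hsets : ((Fintype.piFinset fun _ : Fin k => Finset.range (n + 1)).filter
          (fun s => (∑ l, s l ≤ n) ∧ ∑ l, s l = n)) =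
        (Fintype.piFinset fun _ : Fin k => Finset.range (n + 1)).filter
          (fun s => ∑ l, s l = n) := by
        refine Finset.filter_congr fun s _ => ?_
        constructor
        · exact fun h => h.2
        · exact fun h => ⟨le_of_eq h, h⟩
      rw [hsets]
      refine Finset.sum_congr rfl ?_
      intro s hs
      simp only [Finset.mem_filter] at hs
      rw [hs.2]
      simp [Nat.choose_self]
    rw [hreduce]
    set T := (Fintype.piFinset fun _ : Fin k => Finset.range (n + 1)).filter
        (fun s => ∑ l, s l = n) with hT
    set g : (Fin k → ℕ) → ℂ := fun s => (n.factorial : ℂ) / ∏ l, w l ^ (s l) with hg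
    have hpow : (∑ s ∈ T, g s) ^ r = ∑ p ∈ Fintype.piFinset (fun _ : Fin r => T),
        ∏ j : Fin r, g (p j) := by
      rw [← Finset.prod_univ_sum (fun _ : Fin r => T) (fun _ s => g s)]
      simp [Finset.prod_const]
    rw [hpow]
    refine Finset.sum_congr ?_ ?_
    · ext p
      simp only [Fintype.mem_piFinset, Finset.mem_filter, hT]
      constructor
      · exact fun h => ⟨fun j => (h j).1, fun j => (h j).2⟩
      · exact fun h j => ⟨h.1 j, h.2 j⟩
    · intro p _
      simp only [hg]
      rw [Finset.prod_div_distrib, Finset.prod_const, card_univ, Fintype.card_fin]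
      congr 1
      rw [Finset.prod_comm]
      exact Finset.prod_congr rfl fun l _ => Finset.prod_pow_eq_pow_sum _ _ _
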